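/- With the same setup, defining y_n := (α/h_{n-1}) ∫_0^1 P_n(y) P_{n-1}(y) w(y)/y dy and r_n := (β/h_{n-1}) ∫_0^1 P_n(y) P_{n-1}(y) w(y)/(1-y) dy, integration by parts gives (γ/h_{n-1}) ∫_0^1 P_n(y) P_{n-1}(y) w(y)/(y−t) dy = r_n − y_n − n. -/

import Mathlib

open MeasureTheory Polynomial Set

noncomputable def Wfun (α β γ A B t : ℝ) (x : ℝ) : ℝ :=
  x ^ α * (1 - x) ^ β * (|x - t| ^ γ * A + (max (x - t) 0) ^ γ * B)

lemma continuous_Wfun {α β γ A B t : ℝ} (hα : 0 < α) (hβ : 0 < β) (hγ : 0 < γ) :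
    Continuous (Wfun α β γ A B t) := by
  unfold Wfun
  exact ((Real.continuous_rpow_const hα.le).mul
      ((Real.continuous_rpow_const hβ.le).comp (continuous_const.sub continuous_id))).mul
    ((((Real.continuous_rpow_const hγ.le).comp ((continuous_id.sub continuous_const).abs)).mul
        continuous_const).add
      (((Real.continuous_rpow_const hγ.le).comp
          ((continuous_id.sub continuous_const).max continuous_const)).mul continuous_const))

lemma II_of_bound {a b : ℝ} (hab : a ≤ b) {g ρ : ℝ → ℝ} (hg : Measurable g)
    (hρ : IntervalIntegrable ρ volume a b) (hb : ∀ x ∈ Set.Ioc a b, ‖g x‖ ≤ ρ x) :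
    IntervalIntegrable g volume a b := by
  rw [intervalIntegrable_iff_integrableOn_Ioc_of_le hab] at hρ ⊢
  refine MeasureTheory.Integrable.mono hρ hg.aestronglyMeasurable.restrict ?_
  refine (ae_restrict_iff' measurableSet_Ioc).mpr (ae_of_all _ fun x hx => ?_)
  exact (hb x hx).trans (le_abs_self _)

lemma Wfun_bound {α β γ A B t : ℝ} (hα : 0 < α) (hβ : 0 < β) (hγ : 0 < γ)
    {x : ℝ} (hx0 : 0 < x) (hx1 : x ≤ 1) :
    |Wfun α β γ A B t x| ≤ x ^ α * (1 - x) ^ β * |x - t| ^ γ * (|A| + |B|) := by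
  have h1 : (0:ℝ) ≤ x ^ α := Real.rpow_nonneg hx0.le _
  have h2 : (0:ℝ) ≤ (1 - x) ^ β := Real.rpow_nonneg (by linarith) _
  have h3 : (0:ℝ) ≤ |x - t| ^ γ := Real.rpow_nonneg (abs_nonneg _) _
  have hmax : (max (x - t) 0) ^ γ ≤ |x - t| ^ γ := by
    apply Real.rpow_le_rpow (le_max_right _ _) _ hγ.le
    exact max_le (le_abs_self _) (abs_nonneg _)
  have hmax0 : (0:ℝ) ≤ (max (x - t) 0) ^ γ := Real.rpow_nonneg (le_max_right _ _) _
  unfold Wfun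
  rw [abs_mul, abs_mul, abs_of_nonneg h1, abs_of_nonneg h2]
  have : |(|x - t| ^ γ * A + (max (x - t) 0) ^ γ * B)| ≤ |x - t| ^ γ * (|A| + |B|) := by
    calc |(|x - t| ^ γ * A + (max (x - t) 0) ^ γ * B)|
        ≤ |(|x - t| ^ γ * A)| + |(max (x - t) 0) ^ γ * B| := abs_add_le _ _
      _ = |x - t| ^ γ * |A| + (max (x - t) 0) ^ γ * |B| := by
          rw [abs_mul, abs_mul, abs_of_nonneg h3, abs_of_nonneg hmax0]
      _ ≤ |x - t| ^ γ * |A| + |x - t| ^ γ * |B| := by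
          have := mul_le_mul_of_nonneg_right hmax (abs_nonneg B); linarith
      _ = |x - t| ^ γ * (|A| + |B|) := by ring
  calc x ^ α * (1 - x) ^ β * |(|x - t| ^ γ * A + (max (x - t) 0) ^ γ * B)|
      ≤ x ^ α * (1 - x) ^ β * (|x - t| ^ γ * (|A| + |B|)) :=
        mul_le_mul_of_nonneg_left this (by positivity)
    _ = x ^ α * (1 - x) ^ β * |x - t| ^ γ * (|A| + |B|) := by ring


section II
variable {α β γ A B t : ℝ} {f : ℝ → ℝ}

lemma exists_poly_bound (hf : Continuous f) :
    ∃ M : ℝ, 0 ≤ M ∧ ∀ x ∈ Icc (0:ℝ) 1, |f x| ≤ M := by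
  obtain ⟨C, hC⟩ := (isCompact_Icc (a := (0:ℝ)) (b := 1)).exists_bound_of_continuousOn
    hf.continuousOn
  refine ⟨max C 0, le_max_right _ _, fun x hx => ?_⟩
  exact le_trans (hC x hx) (le_max_left _ _)

lemma II_div_x (hα : 0 < α) (hβ : 0 < β) (hγ : 0 < γ) (ht0 : 0 < t) (ht1 : t < 1)
    (hf : Continuous f) :
    IntervalIntegrable (fun x => f x * Wfun α β γ A B t x / x) volume 0 1 := by
  obtain ⟨M, hM0, hM⟩ := exists_poly_bound hf
  set C := M * (|A| + |B|) with hC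
  have hC0 : 0 ≤ C := by positivity
  refine II_of_bound zero_le_one
    (((hf.mul (continuous_Wfun hα hβ hγ)).measurable).div measurable_id)
    ((intervalIntegral.intervalIntegrable_rpow' (by linarith) : IntervalIntegrable
      (fun x : ℝ => x ^ (α - 1)) volume 0 1).const_mul C) ?_
  intro x hx
  obtain ⟨hx0, hx1⟩ := hx
  have h4 : (1 - x) ^ β ≤ 1 := Real.rpow_le_one (by linarith) (by linarith) hβ.le
  have h5 : |x - t| ^ γ ≤ 1 :=
    Real.rpow_le_one (abs_nonneg _) (abs_le.mpr ⟨by linarith, by linarith⟩) hγ.le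
  have h2 : (0:ℝ) ≤ (1 - x) ^ β := Real.rpow_nonneg (by linarith) _
  have h3 : (0:ℝ) ≤ |x - t| ^ γ := Real.rpow_nonneg (abs_nonneg _) _
  have h1 : (0:ℝ) ≤ x ^ α := Real.rpow_nonneg hx0.le _
  have hW : |Wfun α β γ A B t x| ≤ x ^ α * (|A| + |B|) := by
    refine (Wfun_bound hα hβ hγ hx0 hx1).trans ?_
    have hprod : (1 - x) ^ β * |x - t| ^ γ ≤ 1 := mul_le_one₀ h4 h3 h5
    have h6 := mul_le_mul_of_nonneg_left hprod h1
    nlinarith [abs_nonneg A, abs_nonneg B, mul_le_mul_of_nonneg_right h6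
      (by positivity : (0:ℝ) ≤ |A| + |B|)]
  have hfx : |f x| ≤ M := hM x ⟨hx0.le, hx1⟩
  have hnum : |f x| * |Wfun α β γ A B t x| ≤ C * x ^ α := by
    calc |f x| * |Wfun α β γ A B t x| ≤ M * (x ^ α * (|A| + |B|)) :=
          mul_le_mul hfx hW (abs_nonneg _) hM0
      _ = C * x ^ α := by rw [hC]; ring
  have : ‖f x * Wfun α β γ A B t x / x‖ = |f x| * |Wfun α β γ A B t x| / x := by
    rw [Real.norm_eq_abs, abs_div, abs_mul, abs_of_pos hx0]
  rw [this]
  calc |f x| * |Wfun α β γ A B t x| / x ≤ C * x ^ α / x := by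
        gcongr
    _ = C * x ^ (α - 1) := by
        rw [Real.rpow_sub hx0, Real.rpow_one]; ring
lemma II_div_one_sub (hα : 0 < α) (hβ : 0 < β) (hγ : 0 < γ) (ht0 : 0 < t) (ht1 : t < 1)
    (hf : Continuous f) :
    IntervalIntegrable (fun x => f x * Wfun α β γ A B t x / (1 - x)) volume 0 1 := by
  obtain ⟨M, hM0, hM⟩ := exists_poly_bound hf
  set C := M * (|A| + |B|) with hC
  have hC0 : 0 ≤ C := by positivity
  have hρ : IntervalIntegrable (fun x : ℝ => C * (1 - x) ^ (β - 1)) volume 0 1 := by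
    have h0 : IntervalIntegrable (fun x : ℝ => x ^ (β - 1)) volume 0 1 :=
      intervalIntegral.intervalIntegrable_rpow' (by linarith)
    have h1 := (h0.comp_sub_left 1).symm
    simp only [sub_zero, sub_self] at h1
    exact h1.const_mul C
  refine II_of_bound zero_le_one
    (((hf.mul (continuous_Wfun hα hβ hγ)).measurable).div (measurable_const.sub measurable_id))
    hρ ?_
  intro x hx
  obtain ⟨hx0, hx1⟩ := hx
  rcases eq_or_lt_of_le hx1 with rfl | hx1'
  · simp only [sub_self, div_zero, norm_zero]
    positivity
  · have h4 : x ^ α ≤ 1 := Real.rpow_le_one hx0.le hx1 hα.le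
    have h5 : |x - t| ^ γ ≤ 1 :=
      Real.rpow_le_one (abs_nonneg _) (abs_le.mpr ⟨by linarith, by linarith⟩) hγ.le
    have h1x : (0:ℝ) < 1 - x := by linarith
    have h2 : (0:ℝ) ≤ (1 - x) ^ β := Real.rpow_nonneg (by linarith) _
    have h3 : (0:ℝ) ≤ |x - t| ^ γ := Real.rpow_nonneg (abs_nonneg _) _
    have h1 : (0:ℝ) ≤ x ^ α := Real.rpow_nonneg hx0.le _
    have hW : |Wfun α β γ A B t x| ≤ (1 - x) ^ β * (|A| + |B|) := by
      refine (Wfun_bound hα hβ hγ hx0 hx1).trans ?_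
      have hprod : x ^ α * |x - t| ^ γ ≤ 1 := mul_le_one₀ h4 h3 h5
      have h6 := mul_le_mul_of_nonneg_left hprod h2
      nlinarith [abs_nonneg A, abs_nonneg B, mul_le_mul_of_nonneg_right h6
        (by positivity : (0:ℝ) ≤ |A| + |B|)]
    have hnum : |f x| * |Wfun α β γ A B t x| ≤ C * (1 - x) ^ β := by
      calc |f x| * |Wfun α β γ A B t x| ≤ M * ((1 - x) ^ β * (|A| + |B|)) :=
            mul_le_mul (hM x ⟨hx0.le, hx1⟩) hW (abs_nonneg _) hM0
        _ = C * (1 - x) ^ β := by rw [hC]; ring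
    have hnorm : ‖f x * Wfun α β γ A B t x / (1 - x)‖
        = |f x| * |Wfun α β γ A B t x| / (1 - x) := by
      rw [Real.norm_eq_abs, abs_div, abs_mul, abs_of_pos h1x]
    rw [hnorm]
    calc |f x| * |Wfun α β γ A B t x| / (1 - x) ≤ C * (1 - x) ^ β / (1 - x) := by gcongr
      _ = C * (1 - x) ^ (β - 1) := by
          rw [Real.rpow_sub h1x, Real.rpow_one]; ring

lemma II_div_sub_t (hα : 0 < α) (hβ : 0 < β) (hγ : 0 < γ) (ht0 : 0 < t) (ht1 : t < 1)
    (hf : Continuous f) :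
    IntervalIntegrable (fun x => f x * Wfun α β γ A B t x / (x - t)) volume 0 1 := by
  obtain ⟨M, hM0, hM⟩ := exists_poly_bound hf
  set C := M * (|A| + |B|) with hC
  have hC0 : 0 ≤ C := by positivity
  have hmeas : Measurable (fun x => f x * Wfun α β γ A B t x / (x - t)) :=
    ((hf.mul (continuous_Wfun hα hβ hγ)).measurable).div (measurable_id.sub measurable_const)
  have habs : ∀ x, 0 < x → x ≤ 1 →
      |f x| * |Wfun α β γ A B t x| ≤ C * |x - t| ^ γ := by
    intro x hx0 hx1
    have h4 : x ^ α ≤ 1 := Real.rpow_le_one hx0.le hx1 hα.le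
    have h5 : (1 - x) ^ β ≤ 1 := Real.rpow_le_one (by linarith) (by linarith) hβ.le
    have h2 : (0:ℝ) ≤ (1 - x) ^ β := Real.rpow_nonneg (by linarith) _
    have h3 : (0:ℝ) ≤ |x - t| ^ γ := Real.rpow_nonneg (abs_nonneg _) _
    have h1 : (0:ℝ) ≤ x ^ α := Real.rpow_nonneg hx0.le _
    have hW : |Wfun α β γ A B t x| ≤ |x - t| ^ γ * (|A| + |B|) := by
      refine (Wfun_bound hα hβ hγ hx0 hx1).trans ?_
      have hprod : x ^ α * (1 - x) ^ β ≤ 1 := mul_le_one₀ h4 h2 h5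
      have h6 := mul_le_mul_of_nonneg_left hprod h3
      nlinarith [abs_nonneg A, abs_nonneg B, mul_le_mul_of_nonneg_right h6
        (by positivity : (0:ℝ) ≤ |A| + |B|)]
    calc |f x| * |Wfun α β γ A B t x| ≤ M * (|x - t| ^ γ * (|A| + |B|)) :=
          mul_le_mul (hM x ⟨hx0.le, hx1⟩) hW (abs_nonneg _) hM0
      _ = C * |x - t| ^ γ := by rw [hC]; ring
  have part1 : IntervalIntegrable (fun x => f x * Wfun α β γ A B t x / (x - t)) volume 0 t := by
    have hρ : IntervalIntegrable (fun x : ℝ => C * (t - x) ^ (γ - 1)) volume 0 t := by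
      have h0 : IntervalIntegrable (fun x : ℝ => x ^ (γ - 1)) volume 0 t :=
        intervalIntegral.intervalIntegrable_rpow' (by linarith)
      have h1 := (h0.comp_sub_left t).symm
      simp only [sub_zero, sub_self] at h1
      exact h1.const_mul C
    refine II_of_bound ht0.le hmeas hρ ?_
    intro x hx
    obtain ⟨hx0, hx1⟩ := hx
    rcases eq_or_lt_of_le hx1 with rfl | hxt
    · simp only [sub_self, div_zero, norm_zero]
      positivity
    · have htx : (0:ℝ) < t - x := by linarith
      have hnorm : ‖f x * Wfun α β γ A B t x / (x - t)‖
          = |f x| * |Wfun α β γ A B t x| / (t - x) := by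
        rw [Real.norm_eq_abs, abs_div, abs_mul]
        congr 1
        rw [abs_of_neg (by linarith : x - t < 0)]; ring
      rw [hnorm]
      have habs' : |x - t| = t - x := by
        rw [abs_of_neg (by linarith : x - t < 0)]; ring
      calc |f x| * |Wfun α β γ A B t x| / (t - x) ≤ C * (t - x) ^ γ / (t - x) := by
            have := habs x hx0 (by linarith)
            rw [habs'] at this
            gcongr
        _ = C * (t - x) ^ (γ - 1) := by
            rw [Real.rpow_sub htx, Real.rpow_one]; ring
  have part2 : IntervalIntegrable (fun x => f x * Wfun α β γ A B t x / (x - t)) volume t 1 := by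
    have hρ : IntervalIntegrable (fun x : ℝ => C * (x - t) ^ (γ - 1)) volume t 1 := by
      have h0 : IntervalIntegrable (fun x : ℝ => x ^ (γ - 1)) volume 0 (1 - t) :=
        intervalIntegral.intervalIntegrable_rpow' (by linarith)
      have h1 := h0.comp_sub_right t
      simp only [zero_add, sub_add_cancel] at h1
      exact h1.const_mul C
    refine II_of_bound ht1.le hmeas hρ ?_
    intro x hx
    obtain ⟨hx0, hx1⟩ := hx
    have hxt : (0:ℝ) < x - t := by linarith
    have hnorm : ‖f x * Wfun α β γ A B t x / (x - t)‖
        = |f x| * |Wfun α β γ A B t x| / (x - t) := by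
      rw [Real.norm_eq_abs, abs_div, abs_mul, abs_of_pos hxt]
    rw [hnorm]
    have habs' : |x - t| = x - t := abs_of_pos hxt
    calc |f x| * |Wfun α β γ A B t x| / (x - t) ≤ C * (x - t) ^ γ / (x - t) := by
          have := habs x (by linarith) hx1
          rw [habs'] at this
          gcongr
      _ = C * (x - t) ^ (γ - 1) := by
          rw [Real.rpow_sub hxt, Real.rpow_one]; ring
  exact part1.trans part2

end II

lemma hasDerivAt_Wfun {α β γ A B t x : ℝ} (hγ : 0 < γ)
    (hx0 : 0 < x) (hx1 : x < 1) (hxt : x ≠ t) :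
    HasDerivAt (Wfun α β γ A B t)
      (Wfun α β γ A B t x * (α / x - β / (1 - x) + γ / (x - t))) x := by
  have hx0' : x ≠ 0 := hx0.ne'
  have hx1' : (1:ℝ) - x ≠ 0 := by linarith
  have h1 : HasDerivAt (fun y : ℝ => y ^ α) (α * x ^ (α - 1)) x :=
    Real.hasDerivAt_rpow_const (Or.inl hx0')
  have h2 : HasDerivAt (fun y : ℝ => (1 - y) ^ β) (β * (1 - x) ^ (β - 1) * (-1)) x :=
    (Real.hasDerivAt_rpow_const (Or.inl hx1')).comp x ((hasDerivAt_id x).const_sub 1)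
  have hxα : x ^ (α - 1) = x ^ α / x := by
    rw [Real.rpow_sub hx0, Real.rpow_one]
  have hxβ : (1 - x) ^ (β - 1) = (1 - x) ^ β / (1 - x) := by
    rw [Real.rpow_sub (by linarith), Real.rpow_one]
  rcases lt_or_gt_of_ne hxt with hlt | hgt
  · -- x < t : locally Wfun y = y^α (1-y)^β (t-y)^γ * A
    have hxt0 : (0:ℝ) < t - x := by linarith
    have h3 : HasDerivAt (fun y : ℝ => (t - y) ^ γ) (γ * (t - x) ^ (γ - 1) * (-1)) x :=
      (Real.hasDerivAt_rpow_const (Or.inl hxt0.ne')).comp x ((hasDerivAt_id x).const_sub t)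
    have hloc : HasDerivAt (fun y : ℝ => y ^ α * (1 - y) ^ β * ((t - y) ^ γ * A))
        ((α * x ^ (α - 1) * (1 - x) ^ β + x ^ α * (β * (1 - x) ^ (β - 1) * (-1))) *
            ((t - x) ^ γ * A)
          + x ^ α * (1 - x) ^ β * (γ * (t - x) ^ (γ - 1) * (-1) * A)) x :=
      (h1.mul h2).mul (h3.mul_const A)
    have heq : (fun y : ℝ => y ^ α * (1 - y) ^ β * ((t - y) ^ γ * A))
        =ᶠ[nhds x] Wfun α β γ A B t := by
      filter_upwards [Iio_mem_nhds hlt] with y hy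
      have habs : |y - t| = t - y := by
        rw [abs_of_neg (by simp only [mem_Iio] at hy; linarith : y - t < 0)]; ring
      simp only [Wfun, habs, max_eq_right (by simp only [mem_Iio] at hy; linarith : y - t ≤ (0:ℝ)),
        Real.zero_rpow hγ.ne']
      ring
    have : HasDerivAt (Wfun α β γ A B t) _ x := hloc.congr_of_eventuallyEq heq.symm
    convert this using 1
    have hWx : Wfun α β γ A B t x = x ^ α * (1 - x) ^ β * ((t - x) ^ γ * A) := by
      have habs : |x - t| = t - x := by
        rw [abs_of_neg (by linarith : x - t < 0)]; ring
      simp only [Wfun, habs,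
        max_eq_right (by linarith : x - t ≤ (0:ℝ)), Real.zero_rpow hγ.ne']
      ring
    have hxγ : (t - x) ^ (γ - 1) = (t - x) ^ γ / (t - x) := by
      rw [Real.rpow_sub hxt0, Real.rpow_one]
    rw [hWx, hxα, hxβ, hxγ]
    have hxt' : x - t ≠ 0 := by linarith
    field_simp
    ring
  · -- t < x : locally Wfun y = y^α (1-y)^β ((y-t)^γ * (A+B))
    have hxt0 : (0:ℝ) < x - t := by linarith
    have h3 : HasDerivAt (fun y : ℝ => (y - t) ^ γ) (γ * (x - t) ^ (γ - 1)) x := by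
      have : HasDerivAt ((fun x => x ^ γ) ∘ fun x => id x - t) (γ * (x - t) ^ (γ - 1) * 1) x := (Real.hasDerivAt_rpow_const (p := γ) (Or.inl hxt0.ne')).comp x ((hasDerivAt_id x).sub_const t)
      simpa [Function.comp_def] using this
    have hloc : HasDerivAt (fun y : ℝ => y ^ α * (1 - y) ^ β * ((y - t) ^ γ * (A + B)))
        ((α * x ^ (α - 1) * (1 - x) ^ β + x ^ α * (β * (1 - x) ^ (β - 1) * (-1))) *
            ((x - t) ^ γ * (A + B))
          + x ^ α * (1 - x) ^ β * (γ * (x - t) ^ (γ - 1) * (A + B))) x :=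
      (h1.mul h2).mul (h3.mul_const (A + B))
    have heq : (fun y : ℝ => y ^ α * (1 - y) ^ β * ((y - t) ^ γ * (A + B)))
        =ᶠ[nhds x] Wfun α β γ A B t := by
      filter_upwards [Ioi_mem_nhds hgt] with y hy
      simp only [mem_Ioi] at hy
      simp only [Wfun, abs_of_pos (by linarith : (0:ℝ) < y - t),
        max_eq_left (by linarith : (0:ℝ) ≤ y - t)]
      ring
    have : HasDerivAt (Wfun α β γ A B t) _ x := hloc.congr_of_eventuallyEq heq.symm
    convert this using 1
    have hWx : Wfun α β γ A B t x = x ^ α * (1 - x) ^ β * ((x - t) ^ γ * (A + B)) := by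
      simp only [Wfun, abs_of_pos (by linarith : (0:ℝ) < x - t),
        max_eq_left (by linarith : (0:ℝ) ≤ x - t)]
      ring
    have hxγ : (x - t) ^ (γ - 1) = (x - t) ^ γ / (x - t) := by
      rw [Real.rpow_sub hxt0, Real.rpow_one]
    rw [hWx, hxα, hxβ, hxγ]
    field_simp
    ring

lemma Wfun_eq {α β γ A B t : ℝ} (hγ : 0 < γ) (x : ℝ) :
    x ^ α * (1 - x) ^ β * |x - t| ^ γ * (A + B * (if t < x then (1:ℝ) else 0))
      = Wfun α β γ A B t x := by
  unfold Wfun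
  split_ifs with hlt
  · rw [max_eq_left (by linarith : (0:ℝ) ≤ x - t), abs_of_pos (by linarith : (0:ℝ) < x - t)]
    ring
  · rw [max_eq_right (by push_neg at hlt; linarith : x - t ≤ (0:ℝ)), Real.zero_rpow hγ.ne']
    ring

/-- Integration by parts for the mixed integral:
`(γ/h_{n-1}) ∫ P_n P_{n-1} w/(y−t) = r_n − y_n − n`. -/
theorem ibp_Pn_Pnm1 (α β γ A B t : ℝ)
    (hα : 0 < α) (hβ : 0 < β) (hγ : 0 < γ)
    (hA : 0 ≤ A) (hAB : 0 ≤ A + B) (ht : t ∈ Set.Ioo (0 : ℝ) 1)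
    (w : ℝ → ℝ)
    (hw : ∀ x, w x = x ^ α * (1 - x) ^ β * |x - t| ^ γ *
      (A + B * (if t < x then (1 : ℝ) else 0)))
    (P : ℕ → Polynomial ℝ) (h : ℕ → ℝ)
    (hmonic : ∀ n, (P n).Monic)
    (hdeg : ∀ n, (P n).natDegree = n)
    (horth : ∀ m n, ∫ x in (0 : ℝ)..1, (P m).eval x * (P n).eval x * w x
      = if m = n then h n else 0)
    (hpos : ∀ n, 0 < h n)
    (n : ℕ) (hn : 1 ≤ n) :
    (γ / h (n - 1)) *
        ∫ y in (0 : ℝ)..1, (P n).eval y * (P (n - 1)).eval y * w y / (y - t)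
      = (β / h (n - 1)) *
          (∫ y in (0 : ℝ)..1, (P n).eval y * (P (n - 1)).eval y * w y / (1 - y))
        - (α / h (n - 1)) *
          (∫ y in (0 : ℝ)..1, (P n).eval y * (P (n - 1)).eval y * w y / y)
        - n := by
  obtain ⟨ht0, ht1⟩ := ht
  have hwW : w = Wfun α β γ A B t := funext fun x => (hw x).trans (Wfun_eq hγ x)
  subst hwW
  obtain ⟨m, rfl⟩ : ∃ m, n = m + 1 := ⟨n - 1, (Nat.succ_pred_eq_of_pos hn).symm⟩
  have hm1 : m + 1 - 1 = m := rfl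
  rw [hm1]
  set W' : ℝ → ℝ := Wfun α β γ A B t with hW'
  have hWcont : Continuous W' := continuous_Wfun hα hβ hγ
  -- basic integrability of polynomial × weight
  have hint : ∀ p q : Polynomial ℝ,
      IntervalIntegrable (fun x => p.eval x * q.eval x * W' x) volume 0 1 :=
    fun p q => ((p.continuous.mul q.continuous).mul hWcont).intervalIntegrable 0 1
  -- orthogonality against lower-degree polynomials
  have key : ∀ (d : ℕ) (q : Polynomial ℝ) (M : ℕ), q.degree < (d : ℕ) → d ≤ M →
      (∫ x in (0:ℝ)..1, q.eval x * (P M).eval x * W' x) = 0 := by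
    intro d
    induction d with
    | zero =>
      intro q M hq _
      have hq0 : q = 0 := by
        by_contra h0
        rw [Polynomial.degree_eq_natDegree h0] at hq
        exact absurd hq (by exact_mod_cast not_lt.mpr (Nat.zero_le _))
      subst hq0
      simp
    | succ d ih =>
      intro q M hq hM
      set c := q.coeff d with hc
      set r := q - Polynomial.C c * P d with hr
      have hPdc : (P d).coeff d = 1 := by
        have := (hmonic d).coeff_natDegree
        rwa [hdeg d] at this
      have hrdeg : r.degree < (d : ℕ) := by
        rw [Polynomial.degree_lt_iff_coeff_zero]
        intro k hk
        have hk' : d ≤ k := by exact_mod_cast hk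
        rw [hr]
        simp only [Polynomial.coeff_sub, Polynomial.coeff_C_mul]
        rcases eq_or_lt_of_le hk' with rfl | hdk
        · rw [hPdc, hc, mul_one, sub_self]
        · have h1 : q.coeff k = 0 := by
            apply Polynomial.coeff_eq_zero_of_degree_lt
            calc q.degree < ((d+1 : ℕ) : WithBot ℕ) := hq
              _ ≤ (k : WithBot ℕ) := by exact_mod_cast hdk
          have h2 : (P d).coeff k = 0 := by
            apply Polynomial.coeff_eq_zero_of_natDegree_lt
            rw [hdeg d]; exact hdk
          rw [h1, h2, mul_zero, sub_zero]
      have hsplit : (fun x => q.eval x * (P M).eval x * W' x)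
          = fun x => c * ((P d).eval x * (P M).eval x * W' x)
              + r.eval x * (P M).eval x * W' x := by
        funext x
        have : q.eval x = c * (P d).eval x + r.eval x := by
          rw [hr]
          simp only [Polynomial.eval_sub, Polynomial.eval_mul, Polynomial.eval_C]
          ring
        rw [this]; ring
      rw [hsplit, intervalIntegral.integral_add ((hint (P d) (P M)).const_mul c) (hint r (P M)),
        intervalIntegral.integral_const_mul]
      have hdM : d ≠ M := by omega
      rw [show (∫ x in (0:ℝ)..1, (P d).eval x * (P M).eval x * W' x)
            = if d = M then h M else 0 from horth d M, if_neg hdM,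
        ih r M hrdeg (by omega)]
      ring
  -- the polynomial f = P (m+1) * P m
  set f : Polynomial ℝ := P (m + 1) * P m with hf
  have hPmdeg : (P m).degree = (m : ℕ) := by
    rw [Polynomial.degree_eq_natDegree (hmonic m).ne_zero, hdeg m]
  -- ∫ f' W = (m+1) h m
  have hq1 : (Polynomial.derivative (P (m+1)) - Polynomial.C ((m:ℝ)+1) * P m).degree
      < (m : ℕ) := by
    rw [Polynomial.degree_lt_iff_coeff_zero]
    intro k hk
    have hk' : m ≤ k := by exact_mod_cast hk
    simp only [Polynomial.coeff_sub, Polynomial.coeff_C_mul, Polynomial.coeff_derivative]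
    rcases eq_or_lt_of_le hk' with heq | hmk
    · subst heq
      have h1 : (P (m+1)).coeff (m+1) = 1 := by
        have := (hmonic (m+1)).coeff_natDegree
        rwa [hdeg (m+1)] at this
      have h2 : (P m).coeff m = 1 := by
        have := (hmonic m).coeff_natDegree
        rwa [hdeg m] at this
      rw [h1, h2]
      push_cast
      ring
    · have h1 : (P (m+1)).coeff (k+1) = 0 := by
        apply Polynomial.coeff_eq_zero_of_natDegree_lt
        rw [hdeg]; omega
      have h2 : (P m).coeff k = 0 := by
        apply Polynomial.coeff_eq_zero_of_natDegree_lt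
        rw [hdeg]; omega
      rw [h1, h2, zero_mul, mul_zero, sub_zero]
  -- first piece of derivative
  have hD1 : (∫ x in (0:ℝ)..1,
        (Polynomial.derivative (P (m+1))).eval x * (P m).eval x * W' x)
      = ((m:ℝ)+1) * h m := by
    set q1 := Polynomial.derivative (P (m+1)) - Polynomial.C ((m:ℝ)+1) * P m with hq1def
    have hsplit : (fun x => (Polynomial.derivative (P (m+1))).eval x * (P m).eval x * W' x)
        = fun x => q1.eval x * (P m).eval x * W' x
            + ((m:ℝ)+1) * ((P m).eval x * (P m).eval x * W' x) := by
      funext x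
      rw [hq1def]
      simp only [Polynomial.eval_sub, Polynomial.eval_mul, Polynomial.eval_C]
      ring
    rw [hsplit, intervalIntegral.integral_add (hint q1 (P m))
        ((hint (P m) (P m)).const_mul _), intervalIntegral.integral_const_mul,
      key m q1 m hq1 le_rfl,
      show (∫ x in (0:ℝ)..1, (P m).eval x * (P m).eval x * W' x)
          = if m = m then h m else 0 from horth m m, if_pos rfl]
    ring
  have hD2 : (∫ x in (0:ℝ)..1,
        (P (m+1)).eval x * (Polynomial.derivative (P m)).eval x * W' x) = 0 := by
    have hdlt : (Polynomial.derivative (P m)).degree < ((m+1 : ℕ) : WithBot ℕ) := by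
      calc (Polynomial.derivative (P m)).degree < (P m).degree :=
            Polynomial.degree_derivative_lt (hmonic m).ne_zero
        _ = (m : ℕ) := hPmdeg
        _ ≤ ((m+1 : ℕ) : WithBot ℕ) := by exact_mod_cast Nat.le_succ m
    have h0 := key (m+1) (Polynomial.derivative (P m)) (m+1) hdlt le_rfl
    have hcg : (∫ x in (0:ℝ)..1, (P (m+1)).eval x * (Polynomial.derivative (P m)).eval x * W' x)
        = ∫ x in (0:ℝ)..1, (Polynomial.derivative (P m)).eval x * (P (m+1)).eval x * W' x :=
      intervalIntegral.integral_congr fun x _ => by ring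
    rw [hcg]
    exact h0
  have hE : (∫ x in (0:ℝ)..1, (Polynomial.derivative f).eval x * W' x)
      = ((m:ℝ)+1) * h m := by
    have hsplit : (fun x => (Polynomial.derivative f).eval x * W' x)
        = fun x => (Polynomial.derivative (P (m+1))).eval x * (P m).eval x * W' x
            + (P (m+1)).eval x * (Polynomial.derivative (P m)).eval x * W' x := by
      funext x
      rw [hf, Polynomial.derivative_mul]
      simp only [Polynomial.eval_add, Polynomial.eval_mul]
      ring
    rw [hsplit, intervalIntegral.integral_add (hint _ _) (hint _ _), hD1, hD2, add_zero]
  -- FTC setup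
  set F : ℝ → ℝ := fun x => f.eval x * W' x with hF
  set g : ℝ → ℝ := fun x => (Polynomial.derivative f).eval x * W' x
      + (α * (f.eval x * W' x / x) - β * (f.eval x * W' x / (1 - x))
          + γ * (f.eval x * W' x / (x - t))) with hg
  have hFderiv : ∀ x ∈ Set.Ioo (0:ℝ) 1 \ {t}, HasDerivAt F (g x) x := by
    intro x hx
    obtain ⟨⟨hx0, hx1⟩, hxt⟩ := hx
    simp only [Set.mem_singleton_iff] at hxt
    have h1 : HasDerivAt F _ x := (f.hasDerivAt x).mul (hasDerivAt_Wfun (α := α) (β := β) (A := A) (B := B) hγ hx0 hx1 hxt)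
    convert h1 using 1
    rw [hg, hW']
    have hx0' : x ≠ 0 := hx0.ne'
    have hx1' : (1:ℝ) - x ≠ 0 := by intro hc; apply absurd hx1; linarith [sub_eq_zero.mp hc]
    have hxt' : x - t ≠ 0 := sub_ne_zero.mpr hxt
    field_simp
  have hgint : IntervalIntegrable g volume 0 1 := by
    refine IntervalIntegrable.add (((Polynomial.derivative f).continuous.mul
        hWcont).intervalIntegrable 0 1) ?_
    exact (((II_div_x hα hβ hγ ht0 ht1 f.continuous).const_mul α).sub
        ((II_div_one_sub hα hβ hγ ht0 ht1 f.continuous).const_mul β)).add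
      ((II_div_sub_t hα hβ hγ ht0 ht1 f.continuous).const_mul γ)
  have hFTC : (∫ x in (0:ℝ)..1, g x) = F 1 - F 0 :=
    MeasureTheory.integral_eq_of_hasDerivAt_off_countable_of_le F g zero_le_one
      (Set.countable_singleton t) (f.continuous.mul hWcont).continuousOn hFderiv hgint
  have hF1 : F 1 = 0 := by
    rw [hF]
    simp only [hW', Wfun, sub_self, Real.zero_rpow hβ.ne', mul_zero, zero_mul]
  have hF0 : F 0 = 0 := by
    rw [hF]
    simp only [hW', Wfun, Real.zero_rpow hα.ne', zero_mul, mul_zero]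
  set I1 := ∫ x in (0:ℝ)..1, f.eval x * W' x / x with hI1
  set I2 := ∫ x in (0:ℝ)..1, f.eval x * W' x / (1 - x) with hI2
  set I3 := ∫ x in (0:ℝ)..1, f.eval x * W' x / (x - t) with hI3
  have hsplit3 : (∫ x in (0:ℝ)..1, g x)
      = ((m:ℝ)+1) * h m + (α * I1 - β * I2 + γ * I3) := by
    have hi0 : IntervalIntegrable (fun x => (Polynomial.derivative f).eval x * W' x) volume 0 1 :=
      ((Polynomial.derivative f).continuous.mul hWcont).intervalIntegrable 0 1
    have hi1 : IntervalIntegrable (fun x => f.eval x * W' x / x) volume 0 1 :=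
      II_div_x hα hβ hγ ht0 ht1 f.continuous
    have hi2 : IntervalIntegrable (fun x => f.eval x * W' x / (1 - x)) volume 0 1 :=
      II_div_one_sub hα hβ hγ ht0 ht1 f.continuous
    have hi3 : IntervalIntegrable (fun x => f.eval x * W' x / (x - t)) volume 0 1 :=
      II_div_sub_t hα hβ hγ ht0 ht1 f.continuous
    rw [hg]
    beta_reduce
    rw [intervalIntegral.integral_add hi0
      (((hi1.const_mul α).sub
        (hi2.const_mul β)).add
      (hi3.const_mul γ)), hE,
      intervalIntegral.integral_add
        ((hi1.const_mul α).sub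
          (hi2.const_mul β))
        (hi3.const_mul γ),
      intervalIntegral.integral_sub
        (hi1.const_mul α)
        (hi2.const_mul β),
      intervalIntegral.integral_const_mul, intervalIntegral.integral_const_mul,
      intervalIntegral.integral_const_mul]
  have heq : ((m:ℝ)+1) * h m + (α * I1 - β * I2 + γ * I3) = 0 := by
    rw [← hsplit3, hFTC, hF1, hF0, sub_zero]
  -- rewrite the goal integrals
  have hJ1 : (∫ y in (0:ℝ)..1, (P (m+1)).eval y * (P m).eval y * W' y / y) = I1 := by
    rw [hI1]
    apply intervalIntegral.integral_congr
    intro x _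
    rw [hf]
    simp only [Polynomial.eval_mul]
  have hJ2 : (∫ y in (0:ℝ)..1, (P (m+1)).eval y * (P m).eval y * W' y / (1 - y)) = I2 := by
    rw [hI2]
    apply intervalIntegral.integral_congr
    intro x _
    rw [hf]
    simp only [Polynomial.eval_mul]
  have hJ3 : (∫ y in (0:ℝ)..1, (P (m+1)).eval y * (P m).eval y * W' y / (y - t)) = I3 := by
    rw [hI3]
    apply intervalIntegral.integral_congr
    intro x _
    rw [hf]
    simp only [Polynomial.eval_mul]
  rw [hJ1, hJ2, hJ3]
  have hhm : h m ≠ 0 := (hpos m).ne'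
  have hfin : γ * I3 = β * I2 - α * I1 - ((m:ℝ)+1) * h m := by linarith
  push_cast
  field_simp
  linear_combination hfin
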